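/- Let x_1,...,x_n be independent symmetric (around 0) random variables with |x_i| ≤ a_i almost surely, and let m ≥ max_i a_i. Then for any 0 ≤ s ≤ t, Pr[∑ x_i ∈ (t-m, t+m]] ≤ 5·Pr[∑ x_i ∈ (s-m, s+m]]. -/

import Mathlib

open MeasureTheory ProbabilityTheory Set
open scoped ENNReal

namespace DecayAux

/-- Double-window weight of a measure: open window plus closed window of radius `m` around `c`. -/
noncomputable def Wm (m : ℝ) (ν : Measure ℝ) (c : ℝ) : ℝ≥0∞ :=
  ν (Ioo (c - m) (c + m)) + ν (Icc (c - m) (c + m))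

/-- Universal covering lemma: a window at `A` with `|A| ≤ B ≤ m` is dominated by the
windows at `B` and `-B`. -/
lemma Wm_le_add_neg {m A B : ℝ} (ν : Measure ℝ) [IsFiniteMeasure ν]
    (hAB : |A| ≤ B) (hBm : B ≤ m) :
    Wm m ν A ≤ Wm m ν B + Wm m ν (-B) := by
  have hA1 : -B ≤ A := neg_le_of_abs_le hAB
  have hA2 : A ≤ B := le_of_abs_le hAB
  have hB0 : 0 ≤ B := (abs_nonneg A).trans hAB
  set K : Set ℝ := Icc (B - m) (-B + m) with hKdef
  have hoA : Ioo (A - m) (A + m) ⊆ (Ioo (B - m) (B + m) ∪ Ioo (-B - m) (-B + m)) ∪ K := by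
    intro x hx
    simp only [mem_Ioo] at hx
    by_cases h1 : B - m < x ∧ x < B + m
    · exact Or.inl (Or.inl (by simpa [mem_Ioo] using h1))
    · by_cases h2 : -B - m < x ∧ x < -B + m
      · exact Or.inl (Or.inr (by simpa [mem_Ioo] using h2))
      · refine Or.inr ?_
        push_neg at h1 h2
        have hx1 : x ≤ B - m := by
          by_contra hc
          push_neg at hc
          have := h1 hc
          linarith [hx.2]
        have hx2 : m - B ≤ x := by
          by_contra hc
          push_neg at hc
          have h2' := h2 (by linarith [hx.1])
          linarith
        exact ⟨by linarith, by linarith⟩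
  have hcA : Icc (A - m) (A + m) ⊆ Icc (B - m) (B + m) ∪ Icc (-B - m) (-B + m) := by
    intro x hx
    simp only [mem_Icc] at hx
    rcases le_or_gt (B - m) x with h | h
    · exact Or.inl ⟨h, by linarith [hx.2]⟩
    · exact Or.inr ⟨by linarith [hx.1], by linarith⟩
  have hKeq : Icc (B - m) (B + m) ∩ Icc (-B - m) (-B + m) = K := by
    rw [Icc_inter_Icc, max_eq_left (by linarith : -B - m ≤ B - m),
      min_eq_right (by linarith : -B + m ≤ B + m)]
  have h1 : ν (Ioo (A - m) (A + m)) ≤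
      ν (Ioo (B - m) (B + m)) + ν (Ioo (-B - m) (-B + m)) + ν K :=
    le_trans (measure_mono hoA) (le_trans (measure_union_le _ _)
      (add_le_add_left (measure_union_le _ _) _))
  have h2 : ν (Icc (A - m) (A + m)) + ν K ≤
      ν (Icc (B - m) (B + m)) + ν (Icc (-B - m) (-B + m)) := by
    have := measure_union_add_inter (μ := ν) (Icc (B - m) (B + m)) (t := Icc (-B - m) (-B + m))
      measurableSet_Icc
    rw [hKeq] at this
    calc ν (Icc (A - m) (A + m)) + ν K
        ≤ ν (Icc (B - m) (B + m) ∪ Icc (-B - m) (-B + m)) + ν K := by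
          exact add_le_add_left (measure_mono hcA) _
      _ = ν (Icc (B - m) (B + m)) + ν (Icc (-B - m) (-B + m)) := this
  have hKfin : ν K ≠ ⊤ := measure_ne_top ν K
  have : Wm m ν A + ν K ≤ (Wm m ν B + Wm m ν (-B)) + ν K := by
    unfold Wm
    calc ν (Ioo (A - m) (A + m)) + ν (Icc (A - m) (A + m)) + ν K
        = (ν (Ioo (A - m) (A + m))) + (ν (Icc (A - m) (A + m)) + ν K) := by ring
      _ ≤ (ν (Ioo (B - m) (B + m)) + ν (Ioo (-B - m) (-B + m)) + ν K) +
            (ν (Icc (B - m) (B + m)) + ν (Icc (-B - m) (-B + m))) := add_le_add h1 h2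
      _ = (ν (Ioo (B - m) (B + m)) + ν (Icc (B - m) (B + m)) +
            (ν (Ioo (-B - m) (-B + m)) + ν (Icc (-B - m) (-B + m)))) + ν K := by ring
  exact (ENNReal.add_le_add_iff_right hKfin).mp this

section Indep
variable {Ω : Type*} [MeasurableSpace Ω] {μ : Measure Ω} [IsProbabilityMeasure μ]

/-- Fubini decomposition for the sum of two independent real random variables. -/
lemma measure_add_mem_eq_lintegral {X Y : Ω → ℝ} (hX : Measurable X) (hY : Measurable Y)
    (h : ProbabilityTheory.IndepFun X Y μ) {B : Set ℝ} (hB : MeasurableSet B) :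
    μ {ω | X ω + Y ω ∈ B} = ∫⁻ a, μ.map Y {b | a + b ∈ B} ∂(μ.map X) := by
  have hE : MeasurableSet {p : ℝ × ℝ | p.1 + p.2 ∈ B} :=
    (measurable_fst.add measurable_snd) hB
  have hmap : μ.map (fun ω => (X ω, Y ω)) = (μ.map X).prod (μ.map Y) :=
    (ProbabilityTheory.indepFun_iff_map_prod_eq_prod_map_map hX.aemeasurable
      hY.aemeasurable).mp h
  have h1 : μ {ω | X ω + Y ω ∈ B}
      = μ.map (fun ω => (X ω, Y ω)) {p : ℝ × ℝ | p.1 + p.2 ∈ B} := by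
    rw [Measure.map_apply (hX.prodMk hY) hE]
    rfl
  rw [h1, hmap, Measure.prod_apply hE]
  rfl

end Indep

section Main
variable {Ω : Type*} [MeasurableSpace Ω] {μ : Measure Ω} [IsProbabilityMeasure μ]
  {n : ℕ} {x : Fin n → Ω → ℝ}

/-- The law of a partial sum of independent symmetric variables is symmetric. -/
lemma sum_symm (hmeas : ∀ i, Measurable (x i))
    (hindep : iIndepFun x μ)
    (hsymm : ∀ i, μ.map (x i) = μ.map (fun ω => -(x i ω)))
    (T : Finset (Fin n)) :
    ∀ B : Set ℝ, MeasurableSet B →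
      μ {ω | (∑ i ∈ T, x i ω) ∈ B} = μ {ω | -(∑ i ∈ T, x i ω) ∈ B} := by
  classical
  induction T using Finset.induction_on with
  | empty => intro B hB; simp
  | @insert i T hiT ih =>
    intro B hB
    have hY : Measurable (fun ω => ∑ j ∈ T, x j ω) :=
      Finset.measurable_sum _ (fun j _ => hmeas j)
    have hprob : IsProbabilityMeasure (μ.map (fun ω => ∑ j ∈ T, x j ω)) :=
      Measure.isProbabilityMeasure_map hY.aemeasurable
    have hXY : IndepFun (x i) (fun ω => ∑ j ∈ T, x j ω) μ := by
      have h0 := (hindep.indepFun_finsetSum_of_notMem hmeas hiT).symm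
      have : (∑ j ∈ T, x j) = (fun ω => ∑ j ∈ T, x j ω) := by
        funext ω; exact Finset.sum_apply ω T x
      rwa [this] at h0
    have key : ∀ C : Set ℝ, MeasurableSet C →
        μ {ω | x i ω + (∑ j ∈ T, x j ω) ∈ C}
          = ∫⁻ a, μ.map (fun ω => ∑ j ∈ T, x j ω) {b | a + b ∈ C} ∂(μ.map (x i)) :=
      fun C hC => measure_add_mem_eq_lintegral (hmeas i) hY hXY hC
    have hg : Measurable (fun a : ℝ => μ.map (fun ω => ∑ j ∈ T, x j ω) {b | a - b ∈ B}) := by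
      have hE : MeasurableSet {p : ℝ × ℝ | p.1 - p.2 ∈ B} :=
        (measurable_fst.sub measurable_snd) hB
      exact measurable_measure_prodMk_left hE
    have step1 : ∀ a : ℝ, μ.map (fun ω => ∑ j ∈ T, x j ω) {b | a + b ∈ B}
        = μ.map (fun ω => ∑ j ∈ T, x j ω) {b | a - b ∈ B} := by
      intro a
      have hBa : MeasurableSet {y : ℝ | a + y ∈ B} := (measurable_const.add measurable_id) hB
      have hBa' : MeasurableSet {y : ℝ | a - y ∈ B} := (measurable_const.sub measurable_id) hB
      rw [Measure.map_apply hY hBa, Measure.map_apply hY hBa']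
      have h1 : (fun ω => ∑ j ∈ T, x j ω) ⁻¹' {y | a + y ∈ B}
          = {ω | (∑ j ∈ T, x j ω) ∈ {y | a + y ∈ B}} := rfl
      have h2 : (fun ω => ∑ j ∈ T, x j ω) ⁻¹' {y | a - y ∈ B}
          = {ω | -(∑ j ∈ T, x j ω) ∈ {y | a + y ∈ B}} := by
        ext ω; simp only [mem_preimage, mem_setOf_eq, sub_eq_add_neg]
      rw [h1, h2]
      exact ih _ hBa
    have step3 : ∀ a : ℝ, μ.map (fun ω => ∑ j ∈ T, x j ω) {b | (-a) - b ∈ B}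
        = μ.map (fun ω => ∑ j ∈ T, x j ω) {b | a + b ∈ (fun z : ℝ => -z) ⁻¹' B} := by
      intro a
      congr 1
      ext b
      simp only [mem_setOf_eq, mem_preimage]
      constructor
      · intro h
        have e : -(a + b) = -a - b := by ring
        rw [e]; exact h
      · intro h
        have e : -a - b = -(a + b) := by ring
        rw [← e] at h; exact h
    have hBneg : MeasurableSet ((fun z : ℝ => -z) ⁻¹' B) := measurable_neg hB
    have chain : μ {ω | x i ω + (∑ j ∈ T, x j ω) ∈ B}
        = μ {ω | x i ω + (∑ j ∈ T, x j ω) ∈ (fun z : ℝ => -z) ⁻¹' B} := by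
      rw [key B hB, key _ hBneg]
      calc ∫⁻ a, μ.map (fun ω => ∑ j ∈ T, x j ω) {b | a + b ∈ B} ∂(μ.map (x i))
          = ∫⁻ a, μ.map (fun ω => ∑ j ∈ T, x j ω) {b | a - b ∈ B} ∂(μ.map (x i)) :=
            lintegral_congr step1
        _ = ∫⁻ a, μ.map (fun ω => ∑ j ∈ T, x j ω) {b | a - b ∈ B}
              ∂(μ.map (fun ω => -(x i ω))) := by rw [← hsymm i]
        _ = ∫⁻ ω, μ.map (fun ω' => ∑ j ∈ T, x j ω') {b | (-(x i ω)) - b ∈ B} ∂μ :=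
            lintegral_map hg (hmeas i).neg
        _ = ∫⁻ a, μ.map (fun ω' => ∑ j ∈ T, x j ω') {b | (-a) - b ∈ B} ∂(μ.map (x i)) :=
            (lintegral_map (hg.comp measurable_neg) (hmeas i)).symm
        _ = ∫⁻ a, μ.map (fun ω => ∑ j ∈ T, x j ω) {b | a + b ∈ (fun z : ℝ => -z) ⁻¹' B}
              ∂(μ.map (x i)) := lintegral_congr step3
    have hs1 : {ω | (∑ j ∈ insert i T, x j ω) ∈ B}
        = {ω | x i ω + (∑ j ∈ T, x j ω) ∈ B} := by
      ext ω; simp only [mem_setOf_eq, Finset.sum_insert hiT]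
    have hs2 : {ω | -(∑ j ∈ insert i T, x j ω) ∈ B}
        = {ω | x i ω + (∑ j ∈ T, x j ω) ∈ (fun z : ℝ => -z) ⁻¹' B} := by
      ext ω; simp only [mem_setOf_eq, mem_preimage, Finset.sum_insert hiT]
    rw [hs1, hs2, chain]

end Main

section Main2
variable {Ω : Type*} [MeasurableSpace Ω] {μ : Measure Ω} [IsProbabilityMeasure μ]
  {n : ℕ} {x : Fin n → Ω → ℝ}

lemma peel {X Y : Ω → ℝ} (hX : Measurable X) (hY : Measurable Y)
    (hind : IndepFun X Y μ) (r : ℝ) {W : Set ℝ} (hW : MeasurableSet W) :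
    μ {ω | r + (X ω + Y ω) ∈ W} = ∫⁻ a, μ {ω | (r + a) + Y ω ∈ W} ∂(μ.map X) := by
  have hB : MeasurableSet {z : ℝ | r + z ∈ W} := (measurable_const.add measurable_id) hW
  have h1 : {ω | r + (X ω + Y ω) ∈ W} = {ω | X ω + Y ω ∈ {z : ℝ | r + z ∈ W}} := rfl
  rw [h1, measure_add_mem_eq_lintegral hX hY hind hB]
  refine lintegral_congr fun a => ?_
  have hset : {b : ℝ | a + b ∈ {z : ℝ | r + z ∈ W}} = {b : ℝ | (r + a) + b ∈ W} := by
    ext b; simp only [mem_setOf_eq]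
    rw [show r + a + b = r + (a + b) by ring]
  rw [hset]
  have hWb : MeasurableSet {b : ℝ | (r + a) + b ∈ W} := (measurable_const.add measurable_id) hW
  rw [Measure.map_apply hY hWb]
  rfl

lemma Wm_map_sum_neg (hmeas : ∀ i, Measurable (x i))
    (hindep : iIndepFun x μ)
    (hsymm : ∀ i, μ.map (x i) = μ.map (fun ω => -(x i ω)))
    (T : Finset (Fin n)) (m c : ℝ) :
    Wm m (μ.map (fun ω => ∑ i ∈ T, x i ω)) (-c) = Wm m (μ.map (fun ω => ∑ i ∈ T, x i ω)) c := by
  have hY : Measurable (fun ω => ∑ j ∈ T, x j ω) :=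
    Finset.measurable_sum _ (fun j _ => hmeas j)
  have piece : ∀ (W W' : Set ℝ), MeasurableSet W → MeasurableSet W' →
      ({ω : Ω | -(∑ i ∈ T, x i ω) ∈ W} = {ω : Ω | (∑ i ∈ T, x i ω) ∈ W'}) →
      μ.map (fun ω => ∑ i ∈ T, x i ω) W = μ.map (fun ω => ∑ i ∈ T, x i ω) W' := by
    intro W W' hW hW' hEq
    rw [Measure.map_apply hY hW, Measure.map_apply hY hW']
    have h0 : (fun ω => ∑ i ∈ T, x i ω) ⁻¹' W = {ω : Ω | (∑ i ∈ T, x i ω) ∈ W} := rfl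
    have h0' : (fun ω => ∑ i ∈ T, x i ω) ⁻¹' W' = {ω : Ω | (∑ i ∈ T, x i ω) ∈ W'} := rfl
    rw [h0, h0', sum_symm hmeas hindep hsymm T W hW, hEq]
  unfold Wm
  have e1 : μ.map (fun ω => ∑ i ∈ T, x i ω) (Ioo (-c - m) (-c + m))
      = μ.map (fun ω => ∑ i ∈ T, x i ω) (Ioo (c - m) (c + m)) := by
    refine piece _ _ measurableSet_Ioo measurableSet_Ioo ?_
    ext ω; simp only [mem_setOf_eq, mem_Ioo]
    constructor
    · rintro ⟨h1, h2⟩; exact ⟨by linarith, by linarith⟩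
    · rintro ⟨h1, h2⟩; exact ⟨by linarith, by linarith⟩
  have e2 : μ.map (fun ω => ∑ i ∈ T, x i ω) (Icc (-c - m) (-c + m))
      = μ.map (fun ω => ∑ i ∈ T, x i ω) (Icc (c - m) (c + m)) := by
    refine piece _ _ measurableSet_Icc measurableSet_Icc ?_
    ext ω; simp only [mem_setOf_eq, mem_Icc]
    constructor
    · rintro ⟨h1, h2⟩; exact ⟨by linarith, by linarith⟩
    · rintro ⟨h1, h2⟩; exact ⟨by linarith, by linarith⟩
  rw [e1, e2]

end Main2

section Main3
variable {Ω : Type*} [MeasurableSpace Ω] {μ : Measure Ω} [IsProbabilityMeasure μ]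
  {n : ℕ} {x : Fin n → Ω → ℝ}

theorem thmA (hmeas : ∀ i, Measurable (x i))
    (hindep : iIndepFun x μ)
    (hsymm : ∀ i, μ.map (x i) = μ.map (fun ω => -(x i ω)))
    {a : Fin n → ℝ} (hbdd : ∀ i, ∀ᵐ ω ∂μ, |x i ω| ≤ a i)
    {m : ℝ} (hm : ∀ i, a i ≤ m) (hm0 : 0 < m) :
    ∀ T : Finset (Fin n), ∀ r : ℝ, r ≤ 0 → ∀ s t : ℝ, 0 ≤ s → s ≤ t →
      μ {ω | r + ∑ i ∈ T, x i ω ∈ Ioo (t - m) (t + m)}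
        + μ {ω | r + ∑ i ∈ T, x i ω ∈ Icc (t - m) (t + m)}
      ≤ 2 * (μ {ω | r + ∑ i ∈ T, x i ω ∈ Ioo (s - m) (s + m)}
        + μ {ω | r + ∑ i ∈ T, x i ω ∈ Icc (s - m) (s + m)}) := by
  classical
  intro T
  induction T using Finset.induction_on with
  | empty =>
    intro r hr s t hs hst
    have hsub1 : {ω : Ω | r + ∑ i ∈ (∅ : Finset (Fin n)), x i ω ∈ Ioo (t - m) (t + m)} ⊆
        {ω : Ω | r + ∑ i ∈ (∅ : Finset (Fin n)), x i ω ∈ Ioo (s - m) (s + m)} := by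
      intro ω hω
      simp only [Finset.sum_empty, mem_setOf_eq, mem_Ioo] at hω ⊢
      exact ⟨by linarith [hω.1], by linarith [hω.2]⟩
    have hsub2 : {ω : Ω | r + ∑ i ∈ (∅ : Finset (Fin n)), x i ω ∈ Icc (t - m) (t + m)} ⊆
        {ω : Ω | r + ∑ i ∈ (∅ : Finset (Fin n)), x i ω ∈ Icc (s - m) (s + m)} := by
      intro ω hω
      simp only [Finset.sum_empty, mem_setOf_eq, mem_Icc] at hω ⊢
      exact ⟨by linarith [hω.1], by linarith [hω.2]⟩
    calc μ {ω | r + ∑ i ∈ (∅ : Finset (Fin n)), x i ω ∈ Ioo (t - m) (t + m)}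
          + μ {ω | r + ∑ i ∈ (∅ : Finset (Fin n)), x i ω ∈ Icc (t - m) (t + m)}
        ≤ μ {ω | r + ∑ i ∈ (∅ : Finset (Fin n)), x i ω ∈ Ioo (s - m) (s + m)}
          + μ {ω | r + ∑ i ∈ (∅ : Finset (Fin n)), x i ω ∈ Icc (s - m) (s + m)} :=
          add_le_add (measure_mono hsub1) (measure_mono hsub2)
      _ ≤ 2 * (μ {ω | r + ∑ i ∈ (∅ : Finset (Fin n)), x i ω ∈ Ioo (s - m) (s + m)}
          + μ {ω | r + ∑ i ∈ (∅ : Finset (Fin n)), x i ω ∈ Icc (s - m) (s + m)}) := by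
          rw [two_mul]; exact le_self_add
  | @insert i T hiT ih =>
    intro r hr s t hs hst
    have hY : Measurable (fun ω => ∑ j ∈ T, x j ω) :=
      Finset.measurable_sum _ (fun j _ => hmeas j)
    have hprob : IsProbabilityMeasure (μ.map (fun ω => ∑ j ∈ T, x j ω)) :=
      Measure.isProbabilityMeasure_map hY.aemeasurable
    have hXY : IndepFun (x i) (fun ω => ∑ j ∈ T, x j ω) μ := by
      have h0 := (hindep.indepFun_finsetSum_of_notMem hmeas hiT).symm
      have he : (∑ j ∈ T, x j) = (fun ω => ∑ j ∈ T, x j ω) := by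
        funext ω; exact Finset.sum_apply ω T x
      rwa [he] at h0
    -- rewrite the insert-sums
    have hrw : ∀ W : Set ℝ, {ω : Ω | r + ∑ j ∈ insert i T, x j ω ∈ W}
        = {ω : Ω | r + (x i ω + ∑ j ∈ T, x j ω) ∈ W} := by
      intro W; ext ω; simp only [mem_setOf_eq, Finset.sum_insert hiT]
    -- bridge between mapped-measure form and μ-set form
    have bridge : ∀ (ρ : ℝ) (W : Set ℝ), MeasurableSet W →
        (μ.map (fun ω => ∑ j ∈ T, x j ω)) {b | ρ + b ∈ W}
          = μ {ω | ρ + ∑ j ∈ T, x j ω ∈ W} := by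
      intro ρ W hW
      have hWb : MeasurableSet {b : ℝ | ρ + b ∈ W} := (measurable_const.add measurable_id) hW
      rw [Measure.map_apply hY hWb]
      rfl
    -- Fubini for each of the four windows
    have hpeel : ∀ (W : Set ℝ), MeasurableSet W →
        μ {ω | r + (x i ω + ∑ j ∈ T, x j ω) ∈ W}
          = ∫⁻ u, (μ.map (fun ω => ∑ j ∈ T, x j ω)) {b | (r + u) + b ∈ W} ∂(μ.map (x i)) := by
      intro W hW
      rw [peel (hmeas i) hY hXY r hW]
      refine lintegral_congr fun u => ?_
      exact (bridge (r + u) W hW).symm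
    -- measurability of the integrands
    have hFmeas : ∀ (W : Set ℝ), MeasurableSet W →
        Measurable (fun u : ℝ =>
          (μ.map (fun ω => ∑ j ∈ T, x j ω)) {b | (r + u) + b ∈ W}) := by
      intro W hW
      have hE : MeasurableSet {p : ℝ × ℝ | (r + p.1) + p.2 ∈ W} :=
        ((measurable_const.add measurable_fst).add measurable_snd) hW
      exact measurable_measure_prodMk_left hE
    -- pointwise claim
    have claim : ∀ u : ℝ, |u| ≤ a i →
        (μ.map (fun ω => ∑ j ∈ T, x j ω)) {b | (r + u) + b ∈ Ioo (t - m) (t + m)}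
          + (μ.map (fun ω => ∑ j ∈ T, x j ω)) {b | (r + u) + b ∈ Icc (t - m) (t + m)}
        ≤ 2 * ((μ.map (fun ω => ∑ j ∈ T, x j ω)) {b | (r + u) + b ∈ Ioo (s - m) (s + m)}
          + (μ.map (fun ω => ∑ j ∈ T, x j ω)) {b | (r + u) + b ∈ Icc (s - m) (s + m)}) := by
      intro u hu
      have hum : u ≤ m := le_trans (le_trans (le_abs_self u) hu) (hm i)
      rcases le_or_gt (r + u) 0 with hru | hru
      · rw [bridge _ _ measurableSet_Ioo, bridge _ _ measurableSet_Icc,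
          bridge _ _ measurableSet_Ioo, bridge _ _ measurableSet_Icc]
        exact ih (r + u) hru s t hs hst
      · -- crossed case
        have hvm : r + u ≤ m := by linarith
        -- convert to Wm-form
        have hWmf : ∀ ρ c : ℝ,
            (μ.map (fun ω => ∑ j ∈ T, x j ω)) {b | ρ + b ∈ Ioo (c - m) (c + m)}
              + (μ.map (fun ω => ∑ j ∈ T, x j ω)) {b | ρ + b ∈ Icc (c - m) (c + m)}
            = Wm m (μ.map (fun ω => ∑ j ∈ T, x j ω)) (c - ρ) := by
          intro ρ c
          unfold Wm
          congr 1
          · congr 1; ext b; simp only [mem_setOf_eq, mem_Ioo]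
            constructor
            · rintro ⟨h1, h2⟩; exact ⟨by linarith, by linarith⟩
            · rintro ⟨h1, h2⟩; exact ⟨by linarith, by linarith⟩
          · congr 1; ext b; simp only [mem_setOf_eq, mem_Icc]
            constructor
            · rintro ⟨h1, h2⟩; exact ⟨by linarith, by linarith⟩
            · rintro ⟨h1, h2⟩; exact ⟨by linarith, by linarith⟩
        have symW : ∀ c : ℝ, Wm m (μ.map (fun ω => ∑ j ∈ T, x j ω)) (-c)
            = Wm m (μ.map (fun ω => ∑ j ∈ T, x j ω)) c :=
          fun c => Wm_map_sum_neg hmeas hindep hsymm T m c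
        have absW : ∀ c : ℝ, Wm m (μ.map (fun ω => ∑ j ∈ T, x j ω)) c
            = Wm m (μ.map (fun ω => ∑ j ∈ T, x j ω)) |c| := by
          intro c
          rcases abs_cases c with ⟨h, _⟩ | ⟨h, _⟩
          · rw [h]
          · rw [h]; exact (symW c).symm
        have ihW : ∀ s' t' : ℝ, 0 ≤ s' → s' ≤ t' →
            Wm m (μ.map (fun ω => ∑ j ∈ T, x j ω)) t'
              ≤ 2 * Wm m (μ.map (fun ω => ∑ j ∈ T, x j ω)) s' := by
          intro s' t' hs' hst'
          have h0 := ih 0 le_rfl s' t' hs' hst'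
          rw [← bridge 0 _ measurableSet_Ioo, ← bridge 0 _ measurableSet_Icc,
            ← bridge 0 _ measurableSet_Ioo, ← bridge 0 _ measurableSet_Icc,
            hWmf 0 t', hWmf 0 s', sub_zero, sub_zero] at h0
          exact h0
        rw [hWmf (r + u) t, hWmf (r + u) s]
        set v : ℝ := r + u with hvdef
        by_cases habs : |s - v| ≤ |t - v|
        · calc Wm m (μ.map (fun ω => ∑ j ∈ T, x j ω)) (t - v)
              = Wm m (μ.map (fun ω => ∑ j ∈ T, x j ω)) |t - v| := absW _
            _ ≤ 2 * Wm m (μ.map (fun ω => ∑ j ∈ T, x j ω)) |s - v| :=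
                ihW _ _ (abs_nonneg _) habs
            _ = 2 * Wm m (μ.map (fun ω => ∑ j ∈ T, x j ω)) (s - v) := by rw [← absW]
        · push_neg at habs
          have hsv : s < v := by
            by_contra hc
            push_neg at hc
            have h1 : |s - v| = s - v := abs_of_nonneg (by linarith)
            have h2 : t - v ≤ |t - v| := le_abs_self _
            have h3 : s - v ≤ t - v := by linarith
            linarith [habs]
          have hAB : |t - v| ≤ v - s := by
            have : |s - v| = v - s := by
              rw [abs_of_neg (by linarith : s - v < 0)]; ring
            linarith [habs, this.symm.le]
          have hBm : v - s ≤ m := by linarith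
          calc Wm m (μ.map (fun ω => ∑ j ∈ T, x j ω)) (t - v)
              ≤ Wm m (μ.map (fun ω => ∑ j ∈ T, x j ω)) (v - s)
                + Wm m (μ.map (fun ω => ∑ j ∈ T, x j ω)) (-(v - s)) :=
                Wm_le_add_neg _ hAB hBm
            _ = 2 * Wm m (μ.map (fun ω => ∑ j ∈ T, x j ω)) (s - v) := by
                rw [neg_sub]
                have : Wm m (μ.map (fun ω => ∑ j ∈ T, x j ω)) (v - s)
                    = Wm m (μ.map (fun ω => ∑ j ∈ T, x j ω)) (s - v) := by
                  rw [← neg_sub s v, symW]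
                rw [this, two_mul]
    -- assemble via lintegral
    have hae : ∀ᵐ u ∂(μ.map (x i)), |u| ≤ a i := by
      have hset : MeasurableSet {y : ℝ | |y| ≤ a i} := by
        have : Measurable (fun y : ℝ => |y|) := measurable_abs
        exact this measurableSet_Iic
      exact (ae_map_iff (hmeas i).aemeasurable hset).mpr (hbdd i)
    rw [hrw, hrw, hrw, hrw,
      hpeel _ measurableSet_Ioo, hpeel _ measurableSet_Icc,
      hpeel _ measurableSet_Ioo, hpeel _ measurableSet_Icc,
      ← lintegral_add_left (hFmeas _ measurableSet_Ioo),
      ← lintegral_add_left (hFmeas _ measurableSet_Ioo)]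
    calc ∫⁻ u, ((μ.map (fun ω => ∑ j ∈ T, x j ω)) {b | (r + u) + b ∈ Ioo (t - m) (t + m)}
            + (μ.map (fun ω => ∑ j ∈ T, x j ω)) {b | (r + u) + b ∈ Icc (t - m) (t + m)})
            ∂(μ.map (x i))
        ≤ ∫⁻ u, 2 * ((μ.map (fun ω => ∑ j ∈ T, x j ω)) {b | (r + u) + b ∈ Ioo (s - m) (s + m)}
            + (μ.map (fun ω => ∑ j ∈ T, x j ω)) {b | (r + u) + b ∈ Icc (s - m) (s + m)})
            ∂(μ.map (x i)) := by
          refine lintegral_mono_ae (hae.mono fun u hu => ?_)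
          exact claim u hu
      _ = 2 * ∫⁻ u, ((μ.map (fun ω => ∑ j ∈ T, x j ω)) {b | (r + u) + b ∈ Ioo (s - m) (s + m)}
            + (μ.map (fun ω => ∑ j ∈ T, x j ω)) {b | (r + u) + b ∈ Icc (s - m) (s + m)})
            ∂(μ.map (x i)) := lintegral_const_mul' 2 _ (by norm_num)

end Main3
end DecayAux

open MeasureTheory ProbabilityTheory

/-- **Interval decay lemma for sums of independent symmetric bounded random variables.**
If `x_1,...,x_n` are independent, symmetric around `0`, `|x_i| ≤ a_i` a.s., and
`m ≥ max_i a_i`, then for `0 ≤ s ≤ t`,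
`Pr[∑ x_i ∈ (t-m, t+m]] ≤ 5 · Pr[∑ x_i ∈ (s-m, s+m]]`. -/
theorem decay_of_intervals {Ω : Type*} [MeasurableSpace Ω]
    (μ : Measure Ω) [IsProbabilityMeasure μ]
    (n : ℕ) (x : Fin n → Ω → ℝ) (a : Fin n → ℝ) (m : ℝ)
    (hmeas : ∀ i, Measurable (x i))
    (hindep : iIndepFun x μ)
    (hsymm : ∀ i, μ.map (x i) = μ.map (fun ω => -(x i ω)))
    (hbdd : ∀ i, ∀ᵐ ω ∂μ, |x i ω| ≤ a i)
    (hm : ∀ i, a i ≤ m)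
    (s t : ℝ) (hs : 0 ≤ s) (hst : s ≤ t) :
    (μ {ω | (∑ i, x i ω) ∈ Set.Ioc (t - m) (t + m)}).toReal ≤
      5 * (μ {ω | (∑ i, x i ω) ∈ Set.Ioc (s - m) (s + m)}).toReal := by
  classical
  by_cases hm0 : 0 < m
  swap
  · push_neg at hm0
    have h1 : Set.Ioc (t - m) (t + m) = ∅ := by
      rw [Set.Ioc_eq_empty_iff]
      intro hlt; linarith
    rw [h1]
    simp only [Set.mem_empty_iff_false, Set.setOf_false, measure_empty, ENNReal.toReal_zero]
    have : (0:ℝ) ≤ (μ {ω | (∑ i, x i ω) ∈ Set.Ioc (s - m) (s + m)}).toReal :=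
      ENNReal.toReal_nonneg
    linarith
  rcases eq_or_lt_of_le hst with heq | hlt
  · rw [heq]
    have : (0:ℝ) ≤ (μ {ω | (∑ i, x i ω) ∈ Set.Ioc (t - m) (t + m)}).toReal :=
      ENNReal.toReal_nonneg
    linarith
  -- main case : 0 < m, s < t
  have key := DecayAux.thmA hmeas hindep hsymm hbdd hm hm0 Finset.univ 0 le_rfl
  set L : ℝ≥0∞ := μ {ω | (∑ i, x i ω) ∈ Set.Ioc (t - m) (t + m)} with hLdef
  set R : ℝ≥0∞ := μ {ω | (∑ i, x i ω) ∈ Set.Ioc (s - m) (s + m)} with hRdef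
  set δ : ℕ → ℝ := fun k => min (t - s) ((k : ℝ) + 1)⁻¹ with hδdef
  have hδpos : ∀ k, 0 < δ k := by
    intro k
    refine lt_min (by linarith) (by positivity)
  have hδle : ∀ k, s + δ k ≤ t := by
    intro k
    have := min_le_left (t - s) ((k : ℝ) + 1)⁻¹
    simp only [hδdef]; linarith
  have hδanti : Antitone δ := by
    intro k l hkl
    refine min_le_min le_rfl ?_
    apply inv_anti₀ (by positivity)
    have : (k : ℝ) ≤ (l : ℝ) := Nat.cast_le.mpr hkl
    linarith
  set g : ℕ → ℝ≥0∞ := fun k => μ {ω | (∑ i, x i ω) ∈ Set.Ioc (s + m) (s + m + δ k)} with hgdef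
  -- main ENNReal chain
  have main : ∀ k : ℕ, L ≤ 4 * R + 4 * g k := by
    intro k
    have h1 : L ≤ μ {ω | 0 + ∑ i ∈ Finset.univ, x i ω ∈ Set.Icc (t - m) (t + m)} := by
      apply measure_mono
      intro ω hω
      simp only [Set.mem_setOf_eq, Set.mem_Ioc, Set.mem_Icc, zero_add] at hω ⊢
      exact ⟨le_of_lt hω.1, hω.2⟩
    have h2 : μ {ω | 0 + ∑ i ∈ Finset.univ, x i ω ∈ Set.Icc (t - m) (t + m)}
        ≤ μ {ω | 0 + ∑ i ∈ Finset.univ, x i ω ∈ Set.Ioo (t - m) (t + m)}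
          + μ {ω | 0 + ∑ i ∈ Finset.univ, x i ω ∈ Set.Icc (t - m) (t + m)} :=
      self_le_add_left _ _
    have h3 := key (s + δ k) t (by linarith [hδpos k]) (hδle k)
    have h4 : μ {ω | 0 + ∑ i ∈ Finset.univ, x i ω ∈ Set.Ioo (s + δ k - m) (s + δ k + m)}
        + μ {ω | 0 + ∑ i ∈ Finset.univ, x i ω ∈ Set.Icc (s + δ k - m) (s + δ k + m)}
        ≤ 2 * μ {ω | (∑ i, x i ω) ∈ Set.Ioc (s - m) (s + m + δ k)} := by
      have hδk := hδpos k
      have hsub1 : {ω : Ω | 0 + ∑ i ∈ Finset.univ, x i ω ∈ Set.Ioo (s + δ k - m) (s + δ k + m)}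
          ⊆ {ω : Ω | (∑ i, x i ω) ∈ Set.Ioc (s - m) (s + m + δ k)} := by
        intro ω hω
        simp only [Set.mem_setOf_eq, Set.mem_Ioo, Set.mem_Ioc, zero_add] at hω ⊢
        exact ⟨by linarith [hω.1], by linarith [hω.2]⟩
      have hsub2 : {ω : Ω | 0 + ∑ i ∈ Finset.univ, x i ω ∈ Set.Icc (s + δ k - m) (s + δ k + m)}
          ⊆ {ω : Ω | (∑ i, x i ω) ∈ Set.Ioc (s - m) (s + m + δ k)} := by
        intro ω hω
        simp only [Set.mem_setOf_eq, Set.mem_Icc, Set.mem_Ioc, zero_add] at hω ⊢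
        exact ⟨by linarith [hω.1], by linarith [hω.2]⟩
      rw [two_mul]
      exact add_le_add (measure_mono hsub1) (measure_mono hsub2)
    have h5 : μ {ω | (∑ i, x i ω) ∈ Set.Ioc (s - m) (s + m + δ k)} ≤ R + g k := by
      have hδk := hδpos k
      have hu : Set.Ioc (s - m) (s + m + δ k)
          = Set.Ioc (s - m) (s + m) ∪ Set.Ioc (s + m) (s + m + δ k) :=
        (Set.Ioc_union_Ioc_eq_Ioc (by linarith) (by linarith)).symm
      have : {ω : Ω | (∑ i, x i ω) ∈ Set.Ioc (s - m) (s + m + δ k)}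
          ⊆ {ω : Ω | (∑ i, x i ω) ∈ Set.Ioc (s - m) (s + m)}
            ∪ {ω : Ω | (∑ i, x i ω) ∈ Set.Ioc (s + m) (s + m + δ k)} := by
        intro ω hω
        simp only [Set.mem_setOf_eq] at hω
        rw [hu] at hω
        rcases hω with h | h
        · exact Or.inl h
        · exact Or.inr h
      calc μ {ω | (∑ i, x i ω) ∈ Set.Ioc (s - m) (s + m + δ k)}
          ≤ μ ({ω | (∑ i, x i ω) ∈ Set.Ioc (s - m) (s + m)}
              ∪ {ω | (∑ i, x i ω) ∈ Set.Ioc (s + m) (s + m + δ k)}) := measure_mono this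
        _ ≤ R + g k := measure_union_le _ _
    calc L ≤ μ {ω | 0 + ∑ i ∈ Finset.univ, x i ω ∈ Set.Ioo (t - m) (t + m)}
          + μ {ω | 0 + ∑ i ∈ Finset.univ, x i ω ∈ Set.Icc (t - m) (t + m)} := le_trans h1 h2
      _ ≤ 2 * (μ {ω | 0 + ∑ i ∈ Finset.univ, x i ω ∈ Set.Ioo (s + δ k - m) (s + δ k + m)}
          + μ {ω | 0 + ∑ i ∈ Finset.univ, x i ω ∈ Set.Icc (s + δ k - m) (s + δ k + m)}) := h3
      _ ≤ 2 * (2 * μ {ω | (∑ i, x i ω) ∈ Set.Ioc (s - m) (s + m + δ k)}) := by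
          exact mul_le_mul_right h4 2
      _ ≤ 2 * (2 * (R + g k)) := by
          exact mul_le_mul_right (mul_le_mul_right h5 2) 2
      _ = 4 * R + 4 * g k := by ring
  -- limit argument
  have hgmeas : ∀ k, MeasurableSet {ω : Ω | (∑ i, x i ω) ∈ Set.Ioc (s + m) (s + m + δ k)} := by
    intro k
    have hS : Measurable (fun ω => ∑ i, x i ω) := Finset.measurable_sum _ (fun j _ => hmeas j)
    exact hS measurableSet_Ioc
  have hganti : Antitone (fun k => {ω : Ω | (∑ i, x i ω) ∈ Set.Ioc (s + m) (s + m + δ k)}) := by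
    intro k l hkl ω hω
    simp only [Set.mem_setOf_eq, Set.mem_Ioc] at hω ⊢
    exact ⟨hω.1, le_trans hω.2 (by have := hδanti hkl; linarith)⟩
  have hInter : (⋂ k, {ω : Ω | (∑ i, x i ω) ∈ Set.Ioc (s + m) (s + m + δ k)}) = ∅ := by
    ext ω
    simp only [Set.mem_iInter, Set.mem_setOf_eq, Set.mem_Ioc, Set.mem_empty_iff_false,
      iff_false, not_forall]
    by_contra hc
    push_neg at hc
    obtain ⟨k, hk⟩ := exists_nat_one_div_lt (show (0:ℝ) < (∑ i, x i ω) - (s + m) by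
      have := (hc 0).1; linarith)
    refine absurd ((hc k).2) ?_
    push_neg
    have : δ k ≤ ((k : ℝ) + 1)⁻¹ := min_le_right _ _
    have h1d : (1:ℝ)/((k:ℝ)+1) = ((k:ℝ)+1)⁻¹ := one_div _
    rw [h1d] at hk
    linarith
  have htend : Filter.Tendsto (fun k => g k) Filter.atTop (nhds 0) := by
    have := tendsto_measure_iInter_atTop (μ := μ)
      (fun k => (hgmeas k).nullMeasurableSet) hganti ⟨0, measure_ne_top μ _⟩
    rw [hInter] at this
    rw [measure_empty] at this; exact this
  have htoReal : Filter.Tendsto (fun k => (g k).toReal) Filter.atTop (nhds 0) := by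
    have h0 : (0:ℝ≥0∞) ≠ ⊤ := by simp
    have := (ENNReal.tendsto_toReal h0).comp htend
    rw [ENNReal.toReal_zero] at this; exact this
  have hfin : ∀ k, (4 * R + 4 * g k) ≠ ⊤ := by
    intro k
    refine ENNReal.add_ne_top.mpr ⟨?_, ?_⟩
    · exact ENNReal.mul_ne_top (by norm_num) (measure_ne_top μ _)
    · exact ENNReal.mul_ne_top (by norm_num) (measure_ne_top μ _)
  have mainReal : ∀ k : ℕ, L.toReal ≤ 4 * R.toReal + 4 * (g k).toReal := by
    intro k
    have := ENNReal.toReal_mono (hfin k) (main k)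
    rw [ENNReal.toReal_add (ENNReal.mul_ne_top (by norm_num) (measure_ne_top μ _))
      (ENNReal.mul_ne_top (by norm_num) (measure_ne_top μ _)),
      ENNReal.toReal_mul, ENNReal.toReal_mul] at this
    norm_num at this
    convert this using 2 <;> norm_num <;> rfl
  have hlim : Filter.Tendsto (fun k => 4 * R.toReal + 4 * (g k).toReal)
      Filter.atTop (nhds (4 * R.toReal)) := by
    have h2 : Filter.Tendsto (fun k => 4 * (g k).toReal) Filter.atTop (nhds 0) := by
      simpa using htoReal.const_mul (4:ℝ)
    have := Filter.Tendsto.add (tendsto_const_nhds (x := 4 * R.toReal)) h2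
    simpa using this
  have hfinal : L.toReal ≤ 4 * R.toReal := ge_of_tendsto' hlim mainReal
  have hR0 : (0:ℝ) ≤ R.toReal := ENNReal.toReal_nonneg
  linarith
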